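/- Weighted Lipschitz regularity of the invariant section: Let X be a metric space, S a Banach space, t₀ ∈ ℝ, and ρ: (t₀,∞) → (0,∞) monotonically decreasing (antitone). Let ḡ: (t₀,∞) × X → X and L: (t₀,∞) × X × S → S, let 0 ≤ K < 1, C̃ ≥ 0, α ≥ 0 with K·α < 1. Assume (a) ‖L(t,x,e) − L(t,x,e')‖ ≤ K‖e − e'‖ for all t, x, e, e'; (b) ‖L(t+1, ḡ(t,y), 0)‖ ≤ C̃·ρ(t) for all t ∈ (t₀,∞), y ∈ X; (c) d(ḡ(t,y), ḡ(t,y')) ≤ α·d(y,y') for all t, y, y'; (d) ‖L(t+1, x, e) − L(t+1, x', e)‖ ≤ C̃·ρ(t)·d(x,x') for all t ∈ (t₀,∞), x, x' ∈ X, e ∈ S. Then the unique map σ: (t₀,∞) × X → S with sup ‖σ(t,y)‖/ρ(t) < ∞ satisfying σ(t,y) = L(t+1, ḡ(t,y), σ(t+1, ḡ(t,y))) additionally satisfies the weighted Lipschitz estimate ‖σ(t,y) − σ(t,y')‖ ≤ (C̃·α/(1−K·α))·ρ(t)·d(y,y') for all t ∈ (t₀,∞) and y, y' ∈ X. -/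
import Mathlib


/-- Weighted Lipschitz regularity of the invariant section: under the normal
hyperbolicity condition `K * α < 1`, the unique `O(ρ)`-bounded invariant section
satisfies a weighted Lipschitz estimate. -/
theorem weighted_lipschitz_invariant_section
    {X : Type*} [MetricSpace X]
    {S : Type*} [NormedAddCommGroup S] [NormedSpace ℝ S]
    (t₀ : ℝ) (ρ : ℝ → ℝ)
    (hρpos : ∀ t, t₀ < t → 0 < ρ t)
    (hρanti : ∀ s t, t₀ < s → s ≤ t → ρ t ≤ ρ s)
    (g : ℝ → X → X) (L : ℝ → X → S → S)
    (K C α : ℝ) (hK0 : 0 ≤ K) (hK1 : K < 1) (hC : 0 ≤ C) (hα : 0 ≤ α)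
    (hKα : K * α < 1)
    (hLipFiber : ∀ t, t₀ < t → ∀ (x : X) (e e' : S),
      ‖L t x e - L t x e'‖ ≤ K * ‖e - e'‖)
    (hSmall : ∀ t, t₀ < t → ∀ y : X, ‖L (t + 1) (g t y) 0‖ ≤ C * ρ t)
    (hgLip : ∀ t, t₀ < t → ∀ y y' : X, dist (g t y) (g t y') ≤ α * dist y y')
    (hLipBase : ∀ t, t₀ < t → ∀ (x x' : X) (e : S),
      ‖L (t + 1) x e - L (t + 1) x' e‖ ≤ C * ρ t * dist x x')
    (σ : ℝ → X → S)
    (hσbdd : ∃ M : ℝ, ∀ t, t₀ < t → ∀ y : X, ‖σ t y‖ ≤ M * ρ t)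
    (hσinv : ∀ t, t₀ < t → ∀ y : X, σ t y = L (t + 1) (g t y) (σ (t + 1) (g t y))) :
    ∀ t, t₀ < t → ∀ y y' : X,
      ‖σ t y - σ t y'‖ ≤ (C * α / (1 - K * α)) * ρ t * dist y y' := by

  obtain ⟨M, hM⟩ := hσbdd
  intro t ht y y'
  have hM0 : 0 ≤ M := by
    have h1 := hM t ht y
    have h2 := norm_nonneg (σ t y)
    nlinarith [hρpos t ht]
  have hKα0 : 0 ≤ K * α := mul_nonneg hK0 hα
  -- key iterated estimate
  have key : ∀ n : ℕ, ∀ t, t₀ < t → ∀ y y' : X,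
      ‖σ t y - σ t y'‖ ≤ C * α * ρ t * dist y y' * (∑ j ∈ Finset.range n, (K*α)^j)
        + K^n * (2*M) * ρ t := by
    intro n
    induction n with
    | zero =>
      intro t ht y y'
      simp only [Finset.range_zero, Finset.sum_empty, mul_zero, pow_zero, one_mul, zero_add]
      calc ‖σ t y - σ t y'‖ ≤ ‖σ t y‖ + ‖σ t y'‖ := norm_sub_le _ _
        _ ≤ M * ρ t + M * ρ t := add_le_add (hM t ht y) (hM t ht y')
        _ = 2*M*ρ t := by ring
    | succ n ih =>
      intro t ht y y'
      have ht1 : t₀ < t + 1 := by linarith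
      have hρ1 : ρ (t+1) ≤ ρ t := hρanti t (t+1) ht (by linarith)
      have hρpos' : 0 < ρ t := hρpos t ht
      have hρ1pos : 0 < ρ (t+1) := hρpos (t+1) ht1
      set e := σ (t+1) (g t y)
      set e' := σ (t+1) (g t y')
      have step : ‖σ t y - σ t y'‖ ≤ K * ‖e - e'‖ + C * ρ t * α * dist y y' := by
        rw [hσinv t ht y, hσinv t ht y']
        have h1 : ‖L (t+1) (g t y) e - L (t+1) (g t y) e'‖ ≤ K * ‖e - e'‖ :=
          hLipFiber (t+1) ht1 _ _ _
        have h2 : ‖L (t+1) (g t y) e' - L (t+1) (g t y') e'‖ ≤ C * ρ t * dist (g t y) (g t y') :=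
          hLipBase t ht _ _ _
        have h3 : dist (g t y) (g t y') ≤ α * dist y y' := hgLip t ht y y'
        calc ‖L (t+1) (g t y) e - L (t+1) (g t y') e'‖
            ≤ ‖L (t+1) (g t y) e - L (t+1) (g t y) e'‖
              + ‖L (t+1) (g t y) e' - L (t+1) (g t y') e'‖ := by
              have := norm_sub_le_norm_sub_add_norm_sub (L (t+1) (g t y) e)
                (L (t+1) (g t y) e') (L (t+1) (g t y') e')
              linarith
          _ ≤ K * ‖e - e'‖ + C * ρ t * dist (g t y) (g t y') := add_le_add h1 h2
          _ ≤ K * ‖e - e'‖ + C * ρ t * (α * dist y y') := by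
              have : 0 ≤ C * ρ t := mul_nonneg hC hρpos'.le
              nlinarith
          _ = K * ‖e - e'‖ + C * ρ t * α * dist y y' := by ring
      have ihe : ‖e - e'‖ ≤ C * α * ρ (t+1) * dist (g t y) (g t y')
          * (∑ j ∈ Finset.range n, (K*α)^j) + K^n * (2*M) * ρ (t+1) :=
        ih (t+1) ht1 (g t y) (g t y')
      have hsum0 : (0:ℝ) ≤ ∑ j ∈ Finset.range n, (K*α)^j :=
        Finset.sum_nonneg fun j _ => pow_nonneg hKα0 j
      have hd3 : dist (g t y) (g t y') ≤ α * dist y y' := hgLip t ht y y'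
      have hd0 : (0:ℝ) ≤ dist y y' := dist_nonneg
      have ihe2 : ‖e - e'‖ ≤ C * α * ρ t * (α * dist y y')
          * (∑ j ∈ Finset.range n, (K*α)^j) + K^n * (2*M) * ρ t := by
        refine ihe.trans ?_
        gcongr <;> first
          | exact mul_nonneg (mul_nonneg hC hα) hρ1pos.le
          | positivity
          | linarith
      have hgeom : (∑ j ∈ Finset.range (n+1), (K*α)^j)
          = (K*α) * (∑ j ∈ Finset.range n, (K*α)^j) + 1 := geom_sum_succ
      calc ‖σ t y - σ t y'‖ ≤ K * ‖e - e'‖ + C * ρ t * α * dist y y' := step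
        _ ≤ K * (C * α * ρ t * (α * dist y y') * (∑ j ∈ Finset.range n, (K*α)^j)
              + K^n * (2*M) * ρ t) + C * ρ t * α * dist y y' := by
            nlinarith [ihe2, norm_nonneg (e - e')]
        _ = C * α * ρ t * dist y y' * ((K*α) * (∑ j ∈ Finset.range n, (K*α)^j) + 1)
              + K^(n+1) * (2*M) * ρ t := by ring
        _ = C * α * ρ t * dist y y' * (∑ j ∈ Finset.range (n+1), (K*α)^j)
              + K^(n+1) * (2*M) * ρ t := by rw [hgeom]
  -- pass to the limit
  have hρpos' : 0 < ρ t := hρpos t ht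
  have hbound : ∀ n : ℕ, ‖σ t y - σ t y'‖
      ≤ (C * α / (1 - K * α)) * ρ t * dist y y' + K^n * (2*M) * ρ t := by
    intro n
    have h1 := key n t ht y y'
    have h1Kα : 0 < 1 - K*α := by linarith
    have hsumle : (∑ j ∈ Finset.range n, (K*α)^j) ≤ 1 / (1 - K*α) := by
      rw [le_div_iff₀ h1Kα]
      nlinarith [geom_sum_mul (K*α) n, pow_nonneg hKα0 n]
    have hfac : 0 ≤ C * α * ρ t * dist y y' :=
      mul_nonneg (mul_nonneg (mul_nonneg hC hα) hρpos'.le) dist_nonneg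
    have : C * α * ρ t * dist y y' * (∑ j ∈ Finset.range n, (K*α)^j)
        ≤ C * α * ρ t * dist y y' * (1 / (1 - K*α)) :=
      mul_le_mul_of_nonneg_left hsumle hfac
    have heq : C * α * ρ t * dist y y' * (1 / (1 - K*α))
        = (C * α / (1 - K * α)) * ρ t * dist y y' := by ring
    linarith
  have htend : Filter.Tendsto (fun n : ℕ => (C * α / (1 - K * α)) * ρ t * dist y y'
      + K^n * (2*M) * ρ t) Filter.atTop
      (nhds ((C * α / (1 - K * α)) * ρ t * dist y y' + 0 * (2*M) * ρ t)) := by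
    apply Filter.Tendsto.add tendsto_const_nhds
    exact ((tendsto_pow_atTop_nhds_zero_of_lt_one hK0 hK1).mul_const _).mul_const _
  have := ge_of_tendsto' htend hbound
  simpa using this
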